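/- arXiv:2310.03736 — 8 statements merged into one kernel-verified Lean document; each statement's English description precedes it below -/
import Mathlib

section
/- If some connected component S of the formula graph G_C satisfies S = S̄ (i.e., contains a pair of complementary vertices), then no boolean assignment simultaneously satisfies the antisymmetry constraints x_{i,j} = ¬x_{j,i} and the component-equality constraints (x constant on each component of G_C). Otherwise, writing the vertex set as a disjoint union of complementary pairs of components S_1 ∪ S̄_1 ∪ ... ∪ S_k ∪ S̄_k, the satisfying assignments are exactly those obtained from some tuple (s_1,...,s_k) ∈ {0,1}^k by setting x_u = s_i for u ∈ S_i and x_u = ¬s_i for u ∈ S̄_i. -/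
/-- Ordered pairs of distinct elements: the vertices of the formula graph. -/
abbrev Pairs (V : Type*) := {p : V × V // p.1 ≠ p.2}

/-- The complementary (reversed) vertex. -/
def pswap {V : Type*} (u : Pairs V) : Pairs V := ⟨(u.1.2, u.1.1), u.2.symm⟩

/-- Adjacency in the formula graph `G_C`. -/
def FGAdj {V : Type*} (C : Set (V × V × V)) (u v : Pairs V) : Prop :=
  ∃ c ∈ C, (u.1 = (c.1, c.2.1) ∧ v.1 = (c.2.2, c.2.1)) ∨
           (u.1 = (c.2.1, c.1) ∧ v.1 = (c.2.1, c.2.2))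

/-- `S` is a connected component of the formula graph. -/
def IsComp {V : Type*} (C : Set (V × V × V)) (S : Set (Pairs V)) : Prop :=
  ∃ u, S = {v | Relation.EqvGen (FGAdj C) u v}

/-- The antisymmetry constraints `x_{i,j} = ¬ x_{j,i}`. -/
def Antisym {V : Type*} (x : Pairs V → Bool) : Prop :=
  ∀ u, x (pswap u) = !x u

/-- The component-equality constraints: `x` is constant on each connected component. -/
def CompConst {V : Type*} (C : Set (V × V × V)) (x : Pairs V → Bool) : Prop :=
  ∀ u v, Relation.EqvGen (FGAdj C) u v → x u = x v

lemma pswap_pswap {V : Type*} (u : Pairs V) : pswap (pswap u) = u := by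
  obtain ⟨⟨a, b⟩, h⟩ := u; rfl

lemma FGAdj_pswap {V : Type*} (C : Set (V × V × V)) {u v : Pairs V}
    (h : FGAdj C u v) : FGAdj C (pswap u) (pswap v) := by
  obtain ⟨c, hc, h | h⟩ := h
  · exact ⟨c, hc, Or.inr ⟨by simp [pswap, h.1], by simp [pswap, h.2]⟩⟩
  · exact ⟨c, hc, Or.inl ⟨by simp [pswap, h.1], by simp [pswap, h.2]⟩⟩

lemma EqvGen_pswap {V : Type*} (C : Set (V × V × V)) {u v : Pairs V}
    (h : Relation.EqvGen (FGAdj C) u v) :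
    Relation.EqvGen (FGAdj C) (pswap u) (pswap v) := by
  induction h with
  | rel a b hab => exact .rel _ _ (FGAdj_pswap C hab)
  | refl a => exact .refl _
  | symm a b _ ih => exact .symm _ _ ih
  | trans a b c _ _ ih1 ih2 => exact .trans _ _ _ ih1 ih2

/-- if some component `S` satisfies `S = S̄`, no assignment satisfies
antisymmetry plus the component-equality constraints; otherwise, given the complementary
pairs partition `S_1 ∪ S̄_1 ∪ ... ∪ S_k ∪ S̄_k`, the satisfying assignments are exactly
those obtained from a tuple `(s_1, ..., s_k) ∈ {0,1}^k` by setting `x = s_i` on `S_i`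
and `x = ¬ s_i` on `S̄_i`. -/
theorem stmt4 {V : Type*} [Fintype V] (C : Set (V × V × V))
    (hC : ∀ c ∈ C, c.1 ≠ c.2.1 ∧ c.2.1 ≠ c.2.2 ∧ c.1 ≠ c.2.2) :
    ((∃ S, IsComp C S ∧ pswap '' S = S) →
      ¬ ∃ x : Pairs V → Bool, Antisym x ∧ CompConst C x) ∧
    (∀ (k : ℕ) (S : Fin k → Set (Pairs V)),
      (∀ i, IsComp C (S i)) →
      (∀ i, Disjoint (S i) (pswap '' S i)) →
      (∀ u : Pairs V, ∃! i, u ∈ S i ∪ pswap '' S i) →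
      ∀ x : Pairs V → Bool,
        (Antisym x ∧ CompConst C x) ↔
        ∃ s : Fin k → Bool, ∀ i,
          (∀ u ∈ S i, x u = s i) ∧ (∀ u ∈ pswap '' S i, x u = !s i)) := by
  constructor
  · rintro ⟨Sc, ⟨u, rfl⟩, hswap⟩ ⟨x, hA, hE⟩
    have hu : u ∈ {v | Relation.EqvGen (FGAdj C) u v} := Relation.EqvGen.refl u
    have hpu : pswap u ∈ {v | Relation.EqvGen (FGAdj C) u v} := by
      rw [← hswap]; exact ⟨u, hu, rfl⟩
    have := hE u (pswap u) hpu
    rw [hA u] at this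
    simp at this
  · intro k S hcomp hdisj huniq x
    constructor
    · rintro ⟨hA, hE⟩
      refine ⟨fun i => x (hcomp i).choose, fun i => ?_⟩
      have hSi := (hcomp i).choose_spec
      constructor
      · intro u hu
        rw [hSi] at hu
        exact (hE _ _ hu).symm
      · rintro u ⟨v, hv, rfl⟩
        rw [hSi] at hv
        rw [hA v]
        exact congrArg (! ·) (hE _ _ hv).symm
    · rintro ⟨s, hs⟩
      have key : ∀ u : Pairs V, (∃ i, u ∈ S i ∧ x u = s i ∧ x (pswap u) = !s i) ∨
          (∃ i, u ∈ pswap '' S i ∧ x u = !s i ∧ x (pswap u) = s i) := by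
        intro u
        obtain ⟨i, hi, -⟩ := huniq u
        rcases hi with hi | hi
        · refine Or.inl ⟨i, hi, (hs i).1 u hi, (hs i).2 (pswap u) ⟨u, hi, rfl⟩⟩
        · refine Or.inr ⟨i, hi, (hs i).2 u hi, ?_⟩
          obtain ⟨v, hv, rfl⟩ := hi
          rw [pswap_pswap]
          exact (hs i).1 v hv
      constructor
      · intro u
        rcases key u with ⟨i, _, h1, h2⟩ | ⟨i, _, h1, h2⟩ <;> rw [h1, h2] <;> simp
      · intro u v huv
        -- membership in the component cells is preserved along EqvGen
        have mem1 : ∀ i, u ∈ S i → v ∈ S i := by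
          intro i hu
          obtain ⟨w, hw⟩ := hcomp i
          rw [hw] at hu ⊢
          exact hu.trans _ _ _ huv
        have mem2 : ∀ i, u ∈ pswap '' S i → v ∈ pswap '' S i := by
          rintro i ⟨w, hw, rfl⟩
          have h' : pswap v ∈ S i := by
            obtain ⟨z, hz⟩ := hcomp i
            rw [hz] at hw ⊢
            have := EqvGen_pswap C huv
            rw [pswap_pswap] at this
            exact hw.trans _ _ _ this
          exact ⟨pswap v, h', (pswap_pswap v)⟩
        rcases key u with ⟨i, hu, h1, -⟩ | ⟨i, hu, h1, -⟩
        · rw [h1, (hs i).1 v (mem1 i hu)]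
        · rw [h1, (hs i).2 v (mem2 i hu)]
end

section
/- In particular, if the complementary pairs partition of the formula graph G_C exists with k complementary pairs of components, then the number of boolean assignments satisfying both antisymmetry and the component-equality constraints is exactly 2^k. -/
/-- if the complementary pairs partition of the formula graph exists with `k`
complementary pairs of components, then the number of assignments satisfying antisymmetry
and the component-equality constraints is exactly `2 ^ k`. -/
theorem stmt5 {V : Type*} [Fintype V] [DecidableEq V] (C : Set (V × V × V))
    (hC : ∀ c ∈ C, c.1 ≠ c.2.1 ∧ c.2.1 ≠ c.2.2 ∧ c.1 ≠ c.2.2)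
    (k : ℕ) (S : Fin k → Set (Pairs V))
    (hcomp : ∀ i, IsComp C (S i))
    (hdisj : ∀ i, Disjoint (S i) (pswap '' S i))
    (hpart : ∀ u : Pairs V, ∃! i, u ∈ S i ∪ pswap '' S i) :
    Nat.card {x : Pairs V → Bool // Antisym x ∧ CompConst C x} = 2 ^ k := by

  classical
  have hps : ∀ u : Pairs V, pswap (pswap u) = u := fun u => by
    simp [pswap]
  have hadj : ∀ u v, FGAdj C u v → FGAdj C (pswap u) (pswap v) := by
    rintro u v ⟨c, hc, h | h⟩
    · exact ⟨c, hc, Or.inr ⟨by simp [pswap, h.1], by simp [pswap, h.2]⟩⟩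
    · exact ⟨c, hc, Or.inl ⟨by simp [pswap, h.1], by simp [pswap, h.2]⟩⟩
  have heqv : ∀ u v, Relation.EqvGen (FGAdj C) u v →
      Relation.EqvGen (FGAdj C) (pswap u) (pswap v) := by
    intro u v h
    induction h with
    | rel a b hab => exact .rel _ _ (hadj _ _ hab)
    | refl a => exact .refl _
    | symm a b _ ih => exact .symm _ _ ih
    | trans a b c _ _ ih1 ih2 => exact .trans _ _ _ ih1 ih2
  choose rep hrep using hcomp
  have hrepmem : ∀ i, rep i ∈ S i := fun i => by
    rw [hrep i]; exact .refl _
  have hSrel : ∀ i u, u ∈ S i → Relation.EqvGen (FGAdj C) (rep i) u := by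
    intro i u hu; rw [hrep i] at hu; exact hu
  have hclos : ∀ i u v, u ∈ S i → Relation.EqvGen (FGAdj C) u v → v ∈ S i := by
    intro i u v hu h
    rw [hrep i] at hu ⊢
    exact .trans _ _ _ hu h
  choose idx hmem huni using hpart
  set F : (Fin k → Bool) → (Pairs V → Bool) :=
    fun b u => if u ∈ S (idx u) then b (idx u) else !b (idx u) with hF
  have lemA : ∀ b i u, u ∈ S i → F b u = b i := by
    intro b i u hu
    have hi : i = idx u := huni u i (Or.inl hu)
    rw [hi] at hu ⊢
    simp [hF, if_pos hu]
  have lemB : ∀ b i u, u ∈ pswap '' S i → F b u = !b i := by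
    intro b i u hu
    have hi : i = idx u := huni u i (Or.inr hu)
    rw [hi] at hu ⊢
    have hnot : u ∉ S (idx u) := fun h => Set.disjoint_left.mp (hdisj (idx u)) h hu
    simp [hF, if_neg hnot]
  have hAnti : ∀ b, Antisym (F b) := by
    intro b u
    rcases hmem u with hu | hu
    · have h1 : pswap u ∈ pswap '' S (idx u) := ⟨u, hu, rfl⟩
      rw [lemB b _ _ h1, lemA b _ _ hu]
    · obtain ⟨w, hw, hwu⟩ := hu
      have hpu : pswap u = w := by rw [← hwu, hps]
      have h1 : pswap u ∈ S (idx u) := by rw [hpu]; exact hw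
      rw [lemA b (idx u) (pswap u) h1, lemB b (idx u) u ⟨w, hw, hwu⟩, Bool.not_not]
  have hCC : ∀ b, CompConst C (F b) := by
    intro b u v h
    rcases hmem u with hu | hu
    · have hv : v ∈ S (idx u) := hclos _ _ _ hu h
      rw [lemA b _ _ hu, lemA b _ _ hv]
    · obtain ⟨w, hw, hwu⟩ := hu
      have hpu : pswap u = w := by rw [← hwu, hps]
      have h1 : pswap u ∈ S (idx u) := by rw [hpu]; exact hw
      have h2 : pswap v ∈ S (idx u) := hclos _ _ _ h1 (heqv _ _ h)
      have hv : v ∈ pswap '' S (idx u) := ⟨pswap v, h2, hps v⟩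
      rw [lemB b _ _ ⟨w, hw, hwu⟩, lemB b _ _ hv]
  have e : {x : Pairs V → Bool // Antisym x ∧ CompConst C x} ≃ (Fin k → Bool) :=
    { toFun := fun x i => x.1 (rep i)
      invFun := fun b => ⟨F b, hAnti b, hCC b⟩
      left_inv := by
        rintro ⟨x, hx1, hx2⟩
        apply Subtype.ext
        funext u
        show F (fun i => x (rep i)) u = x u
        rcases hmem u with hu | hu
        · exact (lemA (fun i => x (rep i)) (idx u) u hu).trans (hx2 _ _ (hSrel _ _ hu))
        · obtain ⟨w, hw, hwu⟩ := hu
          refine (lemB (fun i => x (rep i)) (idx u) u ⟨w, hw, hwu⟩).trans ?_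
          rw [hx2 _ _ (hSrel _ _ hw), ← hx1 w, hwu]
      right_inv := by
        intro b
        funext i
        exact lemA b i (rep i) (hrepmem i) }
  rw [Nat.card_congr e]
  simp [Nat.card_eq_fintype_card]
end

section
/- A linear order ◁ on V satisfies a set C of NB constraints if and only if the tournament on V induced by ◁ (with edge i → j iff i ◁ j) is an acyclic orientation obtained from the edge sets S_1,...,S_k of the complementary pairs partition by choosing, for each S_i, either its given orientation or its full reversal. -/
/-- A non-betweenness constraint `(i, j, k)` is satisfied by a strict order `r`
if `j` is not strictly between `i` and `k`. -/
def nbSat {V : Type*} (r : V → V → Prop) (c : V × V × V) : Prop :=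
  ¬ (r c.1 c.2.1 ∧ r c.2.1 c.2.2) ∧ ¬ (r c.2.2 c.2.1 ∧ r c.2.1 c.1)

/-- a linear order `r` satisfies the NB constraints `C` iff, viewing each edge
set `S_i` of the complementary pairs partition as directed edges, the tournament induced by
`r` orients each `S_i` either entirely as given or entirely reversed (i.e. it is an acyclic
orientation of the edge sets). -/
theorem stmt6 {V : Type*} [Fintype V] (C : Set (V × V × V))
    (hC : ∀ c ∈ C, c.1 ≠ c.2.1 ∧ c.2.1 ≠ c.2.2 ∧ c.1 ≠ c.2.2)
    (k : ℕ) (S : Fin k → Set (Pairs V))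
    (hcomp : ∀ i, IsComp C (S i))
    (hdisj : ∀ i, Disjoint (S i) (pswap '' S i))
    (hpart : ∀ u : Pairs V, ∃! i, u ∈ S i ∪ pswap '' S i)
    (r : V → V → Prop) (hr : IsStrictTotalOrder V r) :
    (∀ c ∈ C, nbSat r c) ↔
    ∀ i, (∀ u ∈ S i, r u.1.1 u.1.2) ∨ (∀ u ∈ S i, r u.1.2 u.1.1) := by
  classical
  have asy : ∀ a b, r a b → ¬ r b a := fun a b hab hba =>
    (irrefl_of r a) (trans_of r hab hba)
  have tri : ∀ a b, a ≠ b → ¬ r a b → r b a := fun a b hne h => by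
    rcases trichotomous_of r a b with h1 | h1 | h1
    exacts [absurd h1 h, absurd h1 hne, h1]
  constructor
  · intro hsat i
    obtain ⟨u₀, hS⟩ := hcomp i
    have step : ∀ a b : Pairs V, Relation.EqvGen (FGAdj C) a b →
        (r a.1.1 a.1.2 ↔ r b.1.1 b.1.2) := by
      intro a b h
      induction h with
      | rel a b hab =>
        obtain ⟨c, hc, hcase⟩ := hab
        obtain ⟨h1, h2, h3⟩ := hC c hc
        have hn := hsat c hc
        rcases hcase with ⟨ha, hb⟩ | ⟨ha, hb⟩
        · rw [ha, hb]
          constructor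
          · intro h
            by_contra h'
            exact hn.1 ⟨h, tri _ _ (Ne.symm h2) h'⟩
          · intro h
            by_contra h'
            exact hn.2 ⟨h, tri _ _ h1 h'⟩
        · rw [ha, hb]
          constructor
          · intro h
            by_contra h'
            exact hn.2 ⟨tri _ _ h2 h', h⟩
          · intro h
            by_contra h'
            exact hn.1 ⟨tri _ _ (Ne.symm h1) h', h⟩
      | refl a => exact Iff.rfl
      | symm a b _ ih => exact ih.symm
      | trans a b c _ _ ih1 ih2 => exact ih1.trans ih2
    by_cases h0 : r u₀.1.1 u₀.1.2
    · left
      intro u hu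
      rw [hS] at hu
      exact (step u₀ u hu).mp h0
    · right
      intro u hu
      rw [hS] at hu
      exact tri _ _ u.2 (fun h => h0 ((step u₀ u hu).mpr h))
  · intro hor c hc
    obtain ⟨h1, h2, h3⟩ := hC c hc
    set u : Pairs V := ⟨(c.1, c.2.1), h1⟩ with hu_def
    set v : Pairs V := ⟨(c.2.2, c.2.1), Ne.symm h2⟩ with hv_def
    obtain ⟨m, hm, _⟩ := hpart u
    obtain ⟨u₀, hSm⟩ := hcomp m
    have closed : ∀ w w' : Pairs V, w ∈ S m → FGAdj C w w' → w' ∈ S m := by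
      intro w w' hw hadj
      rw [hSm] at hw ⊢
      exact Relation.EqvGen.trans _ _ _ hw (Relation.EqvGen.rel _ _ hadj)
    rcases hm with hm | hm
    · have hv : v ∈ S m := closed u v hm ⟨c, hc, Or.inl ⟨rfl, rfl⟩⟩
      rcases hor m with H | H
      · have hu' : r c.1 c.2.1 := H u hm
        have hv' : r c.2.2 c.2.1 := H v hv
        exact ⟨fun h => asy _ _ hv' h.2, fun h => asy _ _ hu' h.2⟩
      · have hu' : r c.2.1 c.1 := H u hm
        have hv' : r c.2.1 c.2.2 := H v hv
        exact ⟨fun h => asy _ _ hu' h.1, fun h => asy _ _ hv' h.1⟩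
    · obtain ⟨w, hw, hwu⟩ := hm
      have pinv : ∀ z : Pairs V, pswap (pswap z) = z := fun z => rfl
      have hw' : w = pswap u := by rw [← hwu, pinv]
      rw [hw'] at hw
      have hadj : FGAdj C (pswap u) (pswap v) := ⟨c, hc, Or.inr ⟨rfl, rfl⟩⟩
      have hv : pswap v ∈ S m := closed _ _ hw hadj
      rcases hor m with H | H
      · have hu' : r c.2.1 c.1 := H (pswap u) hw
        have hv' : r c.2.1 c.2.2 := H (pswap v) hv
        exact ⟨fun h => asy _ _ hu' h.1, fun h => asy _ _ hv' h.1⟩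
      · have hu' : r c.1 c.2.1 := H (pswap u) hw
        have hv' : r c.2.2 c.2.1 := H (pswap v) hv
        exact ⟨fun h => asy _ _ hv' h.2, fun h => asy _ _ hu' h.2⟩
end

section
/- Deciding whether a set of non-betweenness constraints C over a finite set V is satisfiable by some linear order is fixed-parameter tractable in the number k of complementary pairs of connected components of the formula graph: satisfiability holds iff no component of G_C contains complementary vertices and at least one of the 2^k component-orientations yields an acyclic directed graph. -/
lemma adj_pswap {V : Type*} {C : Set (V × V × V)} {u v : Pairs V} (h : FGAdj C u v) :
    FGAdj C (pswap u) (pswap v) := by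
  obtain ⟨c, hc, ⟨h1, h2⟩ | ⟨h1, h2⟩⟩ := h
  · exact ⟨c, hc, Or.inr ⟨by simp [pswap, h1], by simp [pswap, h2]⟩⟩
  · exact ⟨c, hc, Or.inl ⟨by simp [pswap, h1], by simp [pswap, h2]⟩⟩

lemma eqv_pswap {V : Type*} {C : Set (V × V × V)} {u v : Pairs V}
    (h : Relation.EqvGen (FGAdj C) u v) :
    Relation.EqvGen (FGAdj C) (pswap u) (pswap v) := by
  induction h with
  | rel a b hab => exact Relation.EqvGen.rel _ _ (adj_pswap hab)
  | refl a => exact Relation.EqvGen.refl _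
  | symm a b _ ih => exact Relation.EqvGen.symm _ _ ih
  | trans a b c _ _ ih1 ih2 => exact Relation.EqvGen.trans _ _ _ ih1 ih2

lemma adj_orient {V : Type*} {C : Set (V × V × V)} {r : V → V → Prop}
    (hr : IsStrictTotalOrder V r) (hsat : ∀ c ∈ C, nbSat r c)
    (hC : ∀ c ∈ C, c.1 ≠ c.2.1 ∧ c.2.1 ≠ c.2.2 ∧ c.1 ≠ c.2.2)
    {u v : Pairs V} (h : FGAdj C u v) :
    (r u.1.1 u.1.2 ↔ r v.1.1 v.1.2) := by
  have asym : ∀ a b, r a b → ¬ r b a := fun a b h1 h2 => hr.irrefl a (hr.trans _ _ _ h1 h2)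
  have tot : ∀ a b, a ≠ b → ¬ r a b → r b a := by
    intro a b hab hnab
    rcases (or_iff_not_imp_left.2 fun h₁ => or_iff_not_imp_right.2 fun h₂ => hr.trichotomous a b h₁ h₂ : r a b ∨ a = b ∨ r b a) with h | h | h
    · exact absurd h hnab
    · exact absurd h hab
    · exact h
  obtain ⟨c, hc, ⟨h1, h2⟩ | ⟨h1, h2⟩⟩ := h <;>
    obtain ⟨n1, n2⟩ := hsat c hc <;>
    obtain ⟨hab, hbd, _⟩ := hC c hc <;>
    rw [h1, h2] <;> dsimp only
  · constructor
    · intro hrab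
      exact tot _ _ hbd (fun hbd' => n1 ⟨hrab, hbd'⟩)
    · intro hrdb
      exact tot _ _ hab.symm (fun hba' => n2 ⟨hrdb, hba'⟩)
  · constructor
    · intro hrba
      exact tot _ _ hbd.symm (fun hdb' => n2 ⟨hdb', hrba⟩)
    · intro hrbd
      exact tot _ _ hab (fun hab' => n1 ⟨hab', hrbd⟩)

lemma eqv_orient {V : Type*} {C : Set (V × V × V)} {r : V → V → Prop}
    (hr : IsStrictTotalOrder V r) (hsat : ∀ c ∈ C, nbSat r c)
    (hC : ∀ c ∈ C, c.1 ≠ c.2.1 ∧ c.2.1 ≠ c.2.2 ∧ c.1 ≠ c.2.2)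
    {u v : Pairs V} (h : Relation.EqvGen (FGAdj C) u v) :
    (r u.1.1 u.1.2 ↔ r v.1.1 v.1.2) := by
  induction h with
  | rel a b hab => exact adj_orient hr hsat hC hab
  | refl a => exact Iff.rfl
  | symm a b _ ih => exact ih.symm
  | trans a b c _ _ ih1 ih2 => exact ih1.trans ih2

/-- a set of NB constraints `C` is satisfiable by some linear order iff no
connected component of the formula graph contains a vertex together with its complement,
and for the complementary pairs partition `S_1, ..., S_k` at least one of the `2^k`
orientations (each `S_i` kept or fully reversed) is acyclic, i.e. is realized by a
strict linear order. -/
theorem stmt8 {V : Type*} [Fintype V] (C : Set (V × V × V))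
    (hC : ∀ c ∈ C, c.1 ≠ c.2.1 ∧ c.2.1 ≠ c.2.2 ∧ c.1 ≠ c.2.2) :
    (∃ r : V → V → Prop, IsStrictTotalOrder V r ∧ ∀ c ∈ C, nbSat r c) ↔
    ((∀ u : Pairs V, ¬ Relation.EqvGen (FGAdj C) u (pswap u)) ∧
     ∀ (k : ℕ) (S : Fin k → Set (Pairs V)),
       (∀ i, IsComp C (S i)) →
       (∀ i, Disjoint (S i) (pswap '' S i)) →
       (∀ u : Pairs V, ∃! i, u ∈ S i ∪ pswap '' S i) →
       ∃ r : V → V → Prop, IsStrictTotalOrder V r ∧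
         ∀ i, (∀ u ∈ S i, r u.1.1 u.1.2) ∨ (∀ u ∈ S i, r u.1.2 u.1.1)) := by
  classical
  constructor
  · rintro ⟨r, hr, hsat⟩
    have asym : ∀ a b, r a b → ¬ r b a := fun a b h1 h2 => hr.irrefl a (hr.trans _ _ _ h1 h2)
    have tot : ∀ a b, a ≠ b → ¬ r a b → r b a := by
      intro a b hab hnab
      rcases (or_iff_not_imp_left.2 fun h₁ => or_iff_not_imp_right.2 fun h₂ => hr.trichotomous a b h₁ h₂ : r a b ∨ a = b ∨ r b a) with h | h | h
      · exact absurd h hnab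
      · exact absurd h hab
      · exact h
    constructor
    · intro u hu
      have := eqv_orient hr hsat hC hu
      by_cases h : r u.1.1 u.1.2
      · exact asym _ _ h (this.mp h)
      · exact h (this.mpr (tot _ _ u.2 h))
    · intro k S hcomp _ _
      refine ⟨r, hr, fun i => ?_⟩
      obtain ⟨u₀, hS⟩ := hcomp i
      by_cases h0 : r u₀.1.1 u₀.1.2
      · left
        intro u hu
        rw [hS] at hu
        exact (eqv_orient hr hsat hC hu).mp h0
      · right
        intro u hu
        rw [hS] at hu
        have : ¬ r u.1.1 u.1.2 := fun h => h0 ((eqv_orient hr hsat hC hu).mpr h)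
        exact tot _ _ u.2 this
  · rintro ⟨h1, h2⟩
    -- the complementary-pair equivalence relation
    letI sd : Setoid (Pairs V) :=
      ⟨fun u v => Relation.EqvGen (FGAdj C) u v ∨ Relation.EqvGen (FGAdj C) u (pswap v), by
        refine ⟨fun u => Or.inl (Relation.EqvGen.refl u), ?_, ?_⟩
        · rintro u v (h | h)
          · exact Or.inl (Relation.EqvGen.symm _ _ h)
          · refine Or.inr (Relation.EqvGen.symm _ _ ?_)
            have := eqv_pswap h
            rwa [pswap_pswap] at this
        · rintro u v w (h | h) (h' | h')
          · exact Or.inl (Relation.EqvGen.trans _ _ _ h h')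
          · exact Or.inr (Relation.EqvGen.trans _ _ _ h h')
          · exact Or.inr (Relation.EqvGen.trans _ _ _ h (eqv_pswap h'))
          · refine Or.inl (Relation.EqvGen.trans _ _ _ h ?_)
            have := eqv_pswap h'
            rwa [pswap_pswap] at this⟩
    set k := Fintype.card (Quotient sd) with hk
    let e : Fin k ≃ Quotient sd := (Fintype.equivFin (Quotient sd)).symm
    let S : Fin k → Set (Pairs V) := fun i => {v | Relation.EqvGen (FGAdj C) (e i).out v}
    have hcomp : ∀ i, IsComp C (S i) := fun i => ⟨(e i).out, rfl⟩
    have hdisj : ∀ i, Disjoint (S i) (pswap '' S i) := by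
      intro i
      rw [Set.disjoint_left]
      rintro x hx ⟨w, hw, hwx⟩
      have hx' : Relation.EqvGen (FGAdj C) (e i).out x := hx
      have hw' : Relation.EqvGen (FGAdj C) (e i).out w := hw
      have : Relation.EqvGen (FGAdj C) w (pswap w) := by
        rw [hwx]
        exact Relation.EqvGen.trans _ _ _ (Relation.EqvGen.symm _ _ hw') hx'
      exact h1 w this
    have huniq : ∀ u : Pairs V, ∃! i, u ∈ S i ∪ pswap '' S i := by
      intro u
      refine ⟨e.symm (Quotient.mk sd u), ?_, ?_⟩
      · have hrel : sd.r (Quotient.mk sd u).out u := Quotient.mk_out u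
        have he : e (e.symm (Quotient.mk sd u)) = Quotient.mk sd u := e.apply_symm_apply _
        rcases hrel with h | h
        · left
          show Relation.EqvGen (FGAdj C) (e _).out u
          rw [he]; exact h
        · right
          refine ⟨pswap u, ?_, pswap_pswap u⟩
          show Relation.EqvGen (FGAdj C) (e _).out (pswap u)
          rw [he]; exact h
      · intro j hj
        have : sd.r (e j).out u := by
          rcases hj with h | ⟨w, hw, hwu⟩
          · exact Or.inl h
          · refine Or.inr ?_
            have : pswap u = w := by rw [← hwu, pswap_pswap]
            rw [this]; exact hw
        have : Quotient.mk sd (e j).out = Quotient.mk sd u := Quotient.sound this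
        rw [Quotient.out_eq] at this
        rw [← this, e.symm_apply_apply]
    obtain ⟨r, hr, horient⟩ := h2 k S hcomp hdisj huniq
    have asym : ∀ a b, r a b → ¬ r b a := fun a b ha hb => hr.irrefl a (hr.trans _ _ _ ha hb)
    refine ⟨r, hr, ?_⟩
    intro c hc
    obtain ⟨hab, hbd, had⟩ := hC c hc
    set u : Pairs V := ⟨(c.1, c.2.1), hab⟩ with hu
    set v : Pairs V := ⟨(c.2.2, c.2.1), hbd.symm⟩ with hv
    have hadj : FGAdj C u v := ⟨c, hc, Or.inl ⟨rfl, rfl⟩⟩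
    -- it suffices to get one of the two coherent orientations of the pair {u,v}
    have key : (r c.1 c.2.1 ∧ r c.2.2 c.2.1) ∨ (r c.2.1 c.1 ∧ r c.2.1 c.2.2) →
        nbSat r c := by
      rintro (⟨h1', h2'⟩ | ⟨h1', h2'⟩)
      · exact ⟨fun h => asym _ _ h2' h.2, fun h => asym _ _ h1' h.2⟩
      · exact ⟨fun h => asym _ _ h1' h.1, fun h => asym _ _ h2' h.1⟩
    obtain ⟨i, hi, -⟩ := huniq u
    rcases hi with hiu | ⟨w, hw, hwu⟩
    · -- u ∈ S i, hence v ∈ S i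
      have hiv : v ∈ S i :=
        Relation.EqvGen.trans _ _ _ hiu (Relation.EqvGen.rel _ _ hadj)
      rcases horient i with ho | ho
      · exact key (Or.inl ⟨ho u hiu, ho v hiv⟩)
      · exact key (Or.inr ⟨ho u hiu, ho v hiv⟩)
    · -- pswap u ∈ S i, hence pswap v ∈ S i
      have hwu' : pswap u = w := by rw [← hwu, pswap_pswap]
      have hiu : pswap u ∈ S i := by rw [hwu']; exact hw
      have hiv : pswap v ∈ S i :=
        Relation.EqvGen.trans _ _ _ hiu (Relation.EqvGen.rel _ _ (adj_pswap hadj))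
      rcases horient i with ho | ho
      · exact key (Or.inr ⟨ho (pswap u) hiu, ho (pswap v) hiv⟩)
      · exact key (Or.inl ⟨ho (pswap u) hiu, ho (pswap v) hiv⟩)
end

section
/- For every n ≥ 4, the approval profile P_n with n voters and n candidates, where voter i approves exactly candidates i and i−1 (indices mod n), is not seemingly single-crossing: no linear order on the voters satisfies the induced NB constraints. -/
/-- Voter `v` strictly prefers candidate `a` to `b`: approves `a` but not `b`. -/
def Pref {m n : ℕ} (P : Fin m → Fin n → Bool) (v : Fin n) (a b : Fin m) : Prop :=
  P a v = true ∧ P b v = false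

/-- The set of NB constraints induced by an approval profile. -/
def CP {m n : ℕ} (P : Fin m → Fin n → Bool) : Set (Fin n × Fin n × Fin n) :=
  {t | ∃ a b, Pref P t.1 a b ∧ Pref P t.2.1 b a ∧ Pref P t.2.2 a b}

/-- The cyclic approval profile `P_n`: voter `v` approves exactly candidates `v` and
`v - 1` (modulo `n`). -/
def Pn (n : ℕ) : Fin n → Fin n → Bool :=
  fun c v => decide ((v : ℕ) = c ∨ (v : ℕ) = (c + 1) % n)

/-- for every `n ≥ 4` the profile `P_n` is not seemingly single-crossing:
no linear order on the voters satisfies the induced NB constraints. -/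
theorem stmt16 (n : ℕ) (hn : 4 ≤ n) :
    ¬ ∃ r : Fin n → Fin n → Prop, IsStrictTotalOrder (Fin n) r ∧
        ∀ c ∈ CP (Pn n), nbSat r c := by
  haveI : NeZero n := ⟨by omega⟩
  letI : CommRing (Fin n) := Fin.instCommRing n
  rintro ⟨r, hr, hsat⟩
  haveI := hr
  -- small numeral facts in `Fin n`
  have hne : ∀ k : ℕ, 0 < k → k < n → ((k : Fin n) : ℕ) ≠ 0 := by
    intro k hk hk'
    rw [Fin.val_natCast, Nat.mod_eq_of_lt hk']
    omega
  have h1 : (1 : Fin n) ≠ 0 := by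
    intro h; exact hne 1 (by omega) (by omega) (by rw [Nat.cast_one]; exact congrArg Fin.val h)
  have h2 : (1 : Fin n) + 1 ≠ 0 := by
    intro h
    have : ((2 : ℕ) : Fin n) = 0 := by push_cast; linear_combination h
    exact hne 2 (by omega) (by omega) (congrArg Fin.val this)
  have h3 : (1 : Fin n) + 1 + 1 ≠ 0 := by
    intro h
    have : ((3 : ℕ) : Fin n) = 0 := by push_cast; linear_combination h
    exact hne 3 (by omega) (by omega) (congrArg Fin.val this)
  -- approval characterization
  have happ : ∀ c v : Fin n, Pn n c v = true ↔ (v = c ∨ v = c + 1) := by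
    intro c v
    have hv1 : ((c + 1 : Fin n) : ℕ) = ((c : ℕ) + 1) % n := by
      rw [Fin.val_add, Fin.val_one', Nat.mod_eq_of_lt (show 1 < n by omega)]
    simp only [Pn, decide_eq_true_eq, Fin.ext_iff, hv1]
  have happ' : ∀ c v : Fin n, Pn n c v = false ↔ (v ≠ c ∧ v ≠ c + 1) := by
    intro c v
    rw [← Bool.not_eq_true, happ]
    tauto
  -- key lemma: each edge (a, a+1) yields an NB constraint against any other voter j
  have hkey : ∀ a j : Fin n, j ≠ a → j ≠ a + 1 → (a, j, a + 1) ∈ CP (Pn n) := by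
    intro a j hja hja1
    by_cases hcase : a = j + 1
    · -- use b := j - 1
      refine ⟨a, j - 1, ⟨?_, ?_⟩, ⟨?_, ?_⟩, ⟨?_, ?_⟩⟩
      · exact (happ a a).2 (Or.inl rfl)
      · refine (happ' (j - 1) a).2 ⟨?_, ?_⟩
        · exact fun h => hja1 (by rw [h, sub_add_cancel])
        · rw [sub_add_cancel]; exact fun h => hja h.symm
      · exact (happ (j - 1) j).2 (Or.inr (by rw [sub_add_cancel]))
      · exact (happ' a j).2 ⟨hja, hja1⟩
      · exact (happ a (a + 1)).2 (Or.inr rfl)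
      · refine (happ' (j - 1) (a + 1)).2 ⟨?_, ?_⟩
        · exact fun h => h3 (by linear_combination h - hcase)
        · rw [sub_add_cancel]; exact fun h => hja1 h.symm
    · -- use b := j
      refine ⟨a, j, ⟨?_, ?_⟩, ⟨?_, ?_⟩, ⟨?_, ?_⟩⟩
      · exact (happ a a).2 (Or.inl rfl)
      · exact (happ' j a).2 ⟨fun h => hja h.symm, hcase⟩
      · exact (happ j j).2 (Or.inl rfl)
      · exact (happ' a j).2 ⟨hja, hja1⟩
      · exact (happ a (a + 1)).2 (Or.inr rfl)
      · exact (happ' j (a + 1)).2 ⟨fun h => hja1 h.symm,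
          fun h => hja (add_right_cancel h).symm⟩
  -- a maximal element for r
  haveI : IsTrans (Fin n) (flip r) := ⟨fun a b c hab hbc => trans_of r hbc hab⟩
  haveI : IsIrrefl (Fin n) (flip r) := ⟨fun a => irrefl_of r a⟩
  obtain ⟨M, -, hM⟩ := (Finite.wellFounded_of_trans_of_irrefl (flip r)).has_min
    Set.univ ⟨⟨0, by omega⟩, trivial⟩
  have hmax : ∀ x : Fin n, x ≠ M → r x M := by
    intro x hx
    rcases trichotomous_of r x M with h | h | h
    · exact h
    · exact absurd h hx
    · exact absurd h (hM x trivial)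
  -- the two edges at M force a contradiction
  have rA : r (M - 1) M := hmax _ (fun h => h1 (by linear_combination -h))
  have rB : r (M + 1) M := hmax _ (fun h => h1 (by linear_combination h))
  have hAB : (M - 1 : Fin n) ≠ M + 1 := fun h => h2 (by linear_combination -h)
  have e1 : M - 1 + 1 = M := sub_add_cancel M 1
  have t1 := hsat _ (hkey (M - 1) (M + 1) hAB.symm
    (by rw [e1]; exact fun h => h1 (by linear_combination h)))
  have t2 := hsat _ (hkey M (M - 1) (fun h => h1 (by linear_combination -h)) hAB)
  rw [show (M - 1 : Fin n) + 1 = M from e1] at t1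
  rcases trichotomous_of r (M - 1) (M + 1) with h | h | h
  · exact t1.1 ⟨h, rB⟩
  · exact hAB h
  · exact t2.2 ⟨h, rA⟩
end

section
/- For every n ≥ 4 and for each voter i of the cyclic approval profile P_n, the NB constraints induced by P_n include (j, i, j+1) for every j ∉ {i, i−1} (indices mod n); consequently every voter must be placed first or last in any satisfying linear order, which is impossible for n ≥ 4. -/
/-- Cancellation of addition inside `% n`. -/
private lemma aux_cancel {n i a b : ℕ} (ha : a < n) (hb : b < n)
    (h : (i + a) % n = (i + b) % n) : a = b := by
  have h' : a ≡ b [MOD n] := Nat.ModEq.add_left_cancel' i h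
  rwa [Nat.ModEq, Nat.mod_eq_of_lt ha, Nat.mod_eq_of_lt hb] at h'

/-- If `(j+1) % n = i` then `(i + n - 1) % n = j`. -/
private lemma aux_pred {n i j : ℕ} (hn : 1 ≤ n) (hj : j < n)
    (h : (j + 1) % n = i) : (i + n - 1) % n = j := by
  have h1 : i + n - 1 = (j + 1) % n + (n - 1) := by omega
  rw [h1, Nat.mod_add_mod]
  have h2 : j + 1 + (n - 1) = j + n := by omega
  rw [h2, Nat.add_mod_right, Nat.mod_eq_of_lt hj]

/-- `((i + n - 1) % n + 1) % n = i`. -/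
private lemma aux_succ_pred {n i : ℕ} (hn : 1 ≤ n) (hi : i < n) :
    ((i + n - 1) % n + 1) % n = i := by
  rw [Nat.mod_add_mod]
  have h2 : i + n - 1 + 1 = i + n := by omega
  rw [h2, Nat.add_mod_right, Nat.mod_eq_of_lt hi]

/-- for `n ≥ 4`, the NB constraints induced by `P_n` include `(j, i, j+1)`
for every `j ∉ {i, i-1}` (indices modulo `n`); consequently, in any satisfying linear
order every voter is placed first or last, which is impossible. -/
theorem stmt17 (n : ℕ) (hn : 4 ≤ n) :
    (∀ i j : Fin n, j ≠ i → (j : ℕ) ≠ ((i : ℕ) + n - 1) % n →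
      (j, i, (⟨((j : ℕ) + 1) % n, Nat.mod_lt _ (by omega)⟩ : Fin n)) ∈ CP (Pn n)) ∧
    (∀ r : Fin n → Fin n → Prop, IsStrictTotalOrder (Fin n) r →
      (∀ c ∈ CP (Pn n), nbSat r c) →
      ∀ i : Fin n, (∀ j, j ≠ i → r i j) ∨ (∀ j, j ≠ i → r j i)) ∧
    ¬ ∃ r : Fin n → Fin n → Prop, IsStrictTotalOrder (Fin n) r ∧
        ∀ c ∈ CP (Pn n), nbSat r c := by
  have hn1 : 1 ≤ n := by omega
  -- Part 1
  have part1 : ∀ i j : Fin n, j ≠ i → (j : ℕ) ≠ ((i : ℕ) + n - 1) % n →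
      (j, i, (⟨((j : ℕ) + 1) % n, Nat.mod_lt _ (by omega)⟩ : Fin n)) ∈ CP (Pn n) := by
    intro i j hji hj2
    have hvji : (j : ℕ) ≠ (i : ℕ) := fun h => hji (Fin.ext h)
    have hvij : (i : ℕ) ≠ (j : ℕ) := fun h => hvji h.symm
    have hjlt : (j : ℕ) < n := j.isLt
    have hilt : (i : ℕ) < n := i.isLt
    by_cases hc : (j : ℕ) = ((i : ℕ) + 1) % n
    · -- j = i + 1 ; choose b = i - 1
      refine ⟨j, ⟨((i : ℕ) + n - 1) % n, Nat.mod_lt _ (by omega)⟩, ⟨?_, ?_⟩, ⟨?_, ?_⟩, ⟨?_, ?_⟩⟩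
      · simp [Pn]
      · simp only [Pn, decide_eq_false_iff_not]
        rintro (h | h)
        · exact hj2 h
        · rw [aux_succ_pred hn1 hilt] at h; exact hvji h
      · simp only [Pn, decide_eq_true_eq]
        right; rw [aux_succ_pred hn1 hilt]
      · simp only [Pn, decide_eq_false_iff_not]
        rintro (h | h)
        · exact hvij h
        · rw [hc, Nat.mod_add_mod] at h
          have h2 : (i : ℕ) + 1 + 1 = (i : ℕ) + 2 := by omega
          rw [h2] at h
          have h3 : ((i : ℕ) + 2) % n = ((i : ℕ) + 0) % n := by
            conv_rhs => rw [Nat.add_zero, Nat.mod_eq_of_lt hilt]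
            exact h.symm
          have := aux_cancel (n := n) (by omega) (by omega) h3
          omega
      · simp [Pn]
      · simp only [Pn, decide_eq_false_iff_not]
        rintro (h | h)
        · rw [hc, Nat.mod_add_mod] at h
          have h1 : (i : ℕ) + 1 + 1 = (i : ℕ) + 2 := by omega
          have h2 : (i : ℕ) + n - 1 = (i : ℕ) + (n - 1) := by omega
          rw [h1, h2] at h
          have := aux_cancel (n := n) (by omega) (by omega) h
          omega
        · rw [aux_succ_pred hn1 hilt] at h
          rw [hc, Nat.mod_add_mod] at h
          have h2 : (i : ℕ) + 1 + 1 = (i : ℕ) + 2 := by omega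
          rw [h2] at h
          have h3 : ((i : ℕ) + 2) % n = ((i : ℕ) + 0) % n := by
            conv_rhs => rw [Nat.add_zero, Nat.mod_eq_of_lt hilt]
            exact h
          have := aux_cancel (n := n) (by omega) (by omega) h3
          omega
    · -- j ≠ i + 1 ; choose b = i
      refine ⟨j, i, ⟨?_, ?_⟩, ⟨?_, ?_⟩, ⟨?_, ?_⟩⟩
      · simp [Pn]
      · simp only [Pn, decide_eq_false_iff_not]
        rintro (h | h)
        · exact hvji h
        · exact hc h
      · simp [Pn]
      · simp only [Pn, decide_eq_false_iff_not]
        rintro (h | h)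
        · exact hvij h
        · exact hj2 (aux_pred hn1 hjlt h.symm).symm
      · simp [Pn]
      · simp only [Pn, decide_eq_false_iff_not]
        rintro (h | h)
        · exact hj2 (aux_pred hn1 hjlt h).symm
        · have h' : (1 + (j : ℕ)) % n = (1 + (i : ℕ)) % n := by
            rw [Nat.add_comm 1 (j : ℕ), Nat.add_comm 1 (i : ℕ)]; exact h
          exact hvji (aux_cancel hjlt hilt h')
  -- Part 2
  have part2 : ∀ r : Fin n → Fin n → Prop, IsStrictTotalOrder (Fin n) r →
      (∀ c ∈ CP (Pn n), nbSat r c) →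
      ∀ i : Fin n, (∀ j, j ≠ i → r i j) ∨ (∀ j, j ≠ i → r j i) := by
    intro r hr hsat i
    have htri : ∀ a b : Fin n, r a b ∨ a = b ∨ r b a := fun a b => by
      by_cases h1 : r a b
      · exact Or.inl h1
      by_cases h2 : r b a
      · exact Or.inr (Or.inr h2)
      exact Or.inr (Or.inl (hr.trichotomous a b h1 h2))
    have hasym : ∀ a b : Fin n, r a b → ¬ r b a := fun a b h1 h2 =>
      hr.irrefl a (hr.trans _ _ _ h1 h2)
    have hilt : (i : ℕ) < n := i.isLt
    set g : ℕ → Fin n := fun k => ⟨((i : ℕ) + 1 + k) % n, Nat.mod_lt _ (by omega)⟩ with hg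
    have hgval : ∀ k, (g k : ℕ) = ((i : ℕ) + (1 + k)) % n := by
      intro k; simp [hg, Nat.add_assoc]
    have hgne : ∀ k, 1 + k < n → g k ≠ i := by
      intro k hk h
      have h1 : ((i : ℕ) + (1 + k)) % n = ((i : ℕ) + 0) % n := by
        rw [Nat.add_zero, Nat.mod_eq_of_lt hilt, ← hgval k, h]
      have := aux_cancel hk (by omega) h1
      omega
    have key : ∀ k, k ≤ n - 2 → (r (g k) i ↔ r (g 0) i) := by
      intro k
      induction k with
      | zero => intro _; exact Iff.rfl
      | succ k ih =>
        intro hk1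
        have ih' := ih (by omega)
        have hne : g k ≠ i := hgne k (by omega)
        have hne2 : (g k : ℕ) ≠ ((i : ℕ) + n - 1) % n := by
          intro h
          rw [hgval k] at h
          have h2 : (i : ℕ) + n - 1 = (i : ℕ) + (n - 1) := by omega
          rw [h2] at h
          have := aux_cancel (n := n) (by omega) (by omega) h
          omega
        have mem := part1 i (g k) hne hne2
        have hnexteq : (⟨((g k : ℕ) + 1) % n, Nat.mod_lt _ (by omega)⟩ : Fin n) = g (k + 1) := by
          apply Fin.ext
          show ((((i : ℕ) + 1 + k) % n) + 1) % n = ((i : ℕ) + 1 + (k + 1)) % n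
          rw [Nat.mod_add_mod]
          congr 1
        rw [hnexteq] at mem
        have hnb := hsat _ mem
        obtain ⟨nb1, nb2⟩ := hnb
        simp only at nb1 nb2
        have hne3 : g (k + 1) ≠ i := hgne (k + 1) (by omega)
        rw [← ih']
        constructor
        · intro h
          have hni : ¬ r i (g k) := fun h' => nb2 ⟨h, h'⟩
          rcases htri (g k) i with h' | h' | h'
          · exact h'
          · exact absurd h' hne
          · exact absurd h' hni
        · intro h
          have hni : ¬ r i (g (k + 1)) := fun h' => nb1 ⟨h, h'⟩
          rcases htri (g (k + 1)) i with h' | h' | h'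
          · exact h'
          · exact absurd h' hne3
          · exact absurd h' hni
    have hall : ∀ j : Fin n, j ≠ i → (r j i ↔ r (g 0) i) := by
      intro j hj
      set k : ℕ := ((j : ℕ) + (n - 1) - (i : ℕ)) % n with hk
      have hklt : k < n := Nat.mod_lt _ (by omega)
      have hgk : g k = j := by
        apply Fin.ext
        rw [hgval k, hk, ← Nat.add_assoc, Nat.add_mod_mod]
        have h1 : (i : ℕ) + 1 + ((j : ℕ) + (n - 1) - (i : ℕ)) = (j : ℕ) + n := by
          have := i.isLt; omega
        rw [h1, Nat.add_mod_right, Nat.mod_eq_of_lt j.isLt]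
      have hkne : k ≠ n - 1 := by
        intro h
        apply hj
        rw [← hgk]
        apply Fin.ext
        rw [hgval k, h]
        have h1 : (i : ℕ) + (1 + (n - 1)) = (i : ℕ) + n := by omega
        rw [h1, Nat.add_mod_right, Nat.mod_eq_of_lt hilt]
      have := key k (by omega)
      rwa [hgk] at this
    by_cases h0 : r (g 0) i
    · right; intro j hj; exact (hall j hj).mpr h0
    · left; intro j hj
      rcases htri j i with h | h | h
      · exact absurd ((hall j hj).mp h) h0
      · exact absurd h hj
      · exact h
  refine ⟨part1, part2, ?_⟩
  rintro ⟨r, hr, hsat⟩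
  have hasym : ∀ a b : Fin n, r a b → ¬ r b a := fun a b h1 h2 =>
    hr.irrefl a (hr.trans _ _ _ h1 h2)
  set a : Fin n := ⟨0, by omega⟩ with ha'
  set b : Fin n := ⟨1, by omega⟩ with hb'
  set c : Fin n := ⟨2, by omega⟩ with hc'
  have hab : a ≠ b := by simp [ha', hb', Fin.ext_iff]
  have hac : a ≠ c := by simp [ha', hc', Fin.ext_iff]
  have hbc : b ≠ c := by simp [hb', hc', Fin.ext_iff]
  rcases part2 r hr hsat a with ha | ha <;>
    rcases part2 r hr hsat b with hb | hb <;>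
      rcases part2 r hr hsat c with hc | hc
  · exact hasym a b (ha b hab.symm) (hb a hab)
  · exact hasym a b (ha b hab.symm) (hb a hab)
  · exact hasym a c (ha c hac.symm) (hc a hac)
  · exact hasym c b (hb c hbc.symm) (hc b hbc)
  · exact hasym b c (hb c hbc.symm) (hc b hbc)
  · exact hasym c a (ha c hac.symm) (hc a hac)
  · exact hasym b a (ha b hab.symm) (hb a hab)
  · exact hasym b a (ha b hab.symm) (hb a hab)
end

section
/- Every proper subprofile of P_n (obtained by deleting at least one voter or candidate), for n ≥ 4, is seemingly single-crossing; hence the family {P_n : n ≥ 4} is an infinite family of minimal non-seemingly-single-crossing approval profiles, so possibly single-crossing approval profiles admit no characterization by finitely many forbidden subprofiles. -/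
/-- An approval profile (candidates `α`, voters `β`) is seemingly single-crossing: some
strict linear order on the voters admits no crossing pattern. -/
def SSCable {α β : Type*} (P : α → β → Bool) : Prop :=
  ∃ r : β → β → Prop, IsStrictTotalOrder β r ∧
    ¬ ∃ (i j k : β) (a b : α), r i j ∧ r j k ∧
      (P a i = true ∧ P b i = false) ∧
      (P b j = true ∧ P a j = false) ∧
      (P a k = true ∧ P b k = false)

/-- `Q` occurs as a subprofile of `P` (up to renaming of voters and candidates). -/
def Embeds {m' n' m n : ℕ} (Q : Fin m' → Fin n' → Bool)
    (P : Fin m → Fin n → Bool) : Prop :=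
  ∃ (f : Fin m' ↪ Fin m) (g : Fin n' ↪ Fin n), ∀ c v, Q c v = P (f c) (g v)

lemma mod_small_cases {n : ℕ} (a : ℕ) (h : a < 2 * n) :
    a % n = a ∨ (n ≤ a ∧ a % n = a - n) := by
  rcases lt_or_ge a n with h1 | h1
  · exact Or.inl (Nat.mod_eq_of_lt h1)
  · right
    refine ⟨h1, ?_⟩
    rw [Nat.mod_eq_sub_mod h1, Nat.mod_eq_of_lt (by omega)]

lemma pn_iff {m : ℕ} (c v : Fin (m + 4)) :
    Pn (m + 4) c v = true ↔ (v = c ∨ v = c + 1) := by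
  have h1 : ((c + 1 : Fin (m + 4)) : ℕ) = ((c : ℕ) + 1) % (m + 4) := by
    rw [Fin.val_add, Fin.val_one]
  simp only [Pn, decide_eq_true_iff, Fin.ext_iff, h1]

lemma pn_false_iff {m : ℕ} (c v : Fin (m + 4)) :
    Pn (m + 4) c v = false ↔ ¬(v = c ∨ v = c + 1) := by
  rw [Bool.eq_false_iff, Ne]
  exact not_congr (pn_iff c v)

lemma part1 (n : ℕ) (hn : 4 ≤ n) (D W : Set (Fin n)) (h : D ≠ Set.univ ∨ W ≠ Set.univ) :
    SSCable (fun (c : D) (v : W) => Pn n c.1 v.1) := by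
  obtain ⟨m, rfl⟩ : ∃ m, n = m + 4 := ⟨n - 4, by omega⟩
  obtain ⟨p, hp⟩ : ∃ p : Fin (m + 4), p ∉ D ∨ p ∉ W := by
    rcases h with h | h
    · obtain ⟨p, hp⟩ := (Set.ne_univ_iff_exists_notMem _).mp h
      exact ⟨p, Or.inl hp⟩
    · obtain ⟨p, hp⟩ := (Set.ne_univ_iff_exists_notMem _).mp h
      exact ⟨p, Or.inr hp⟩
  set d : ℕ := m + 3 - p.val with hdd
  set K : Fin (m + 4) → ℕ := fun v => (v.val + d) % (m + 4) with hK
  have hpd : p.val < m + 4 := p.isLt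
  have hKval : ∀ v : Fin (m + 4), K v = (v.val + d) % (m + 4) := fun _ => rfl
  have hKlt : ∀ v, K v < m + 4 := fun v => Nat.mod_lt _ (by omega)
  have hKinj : ∀ u v : Fin (m + 4), K u = K v → u = v := by
    intro u v huv
    rw [hKval, hKval] at huv
    have hu := mod_small_cases (n := m + 4) (u.val + d) (by have := u.isLt; omega)
    have hv := mod_small_cases (n := m + 4) (v.val + d) (by have := v.isLt; omega)
    have h1 := u.isLt; have h2 := v.isLt
    rcases hu with h3 | ⟨h3, h4⟩ <;> rcases hv with h5 | ⟨h5, h6⟩ <;>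
      (apply Fin.ext; omega)
  have hKn1 : ∀ c : Fin (m + 4), K c = m + 3 → c = p := by
    intro c hc
    rw [hKval] at hc
    have hmc := mod_small_cases (n := m + 4) (c.val + d) (by have := c.isLt; omega)
    have h1 := c.isLt
    rcases hmc with h3 | ⟨h3, h4⟩ <;> (apply Fin.ext; omega)
  have hKsucc : ∀ c : Fin (m + 4), c ≠ p → K (c + 1) = K c + 1 := by
    intro c hc
    have hcp : K c ≠ m + 3 := fun hh => hc (hKn1 c hh)
    have h1 : (c + 1 : Fin (m + 4)).val = (c.val + 1) % (m + 4) := by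
      rw [Fin.val_add, Fin.val_one]
    rw [hKval, h1, Nat.mod_add_mod]
    have e3 : (c.val + 1 + d) % (m + 4) = (c.val + d + 1) % (m + 4) := by
      rw [Nat.add_right_comm]
    rw [e3, ← Nat.mod_add_mod, ← hKval]
    exact Nat.mod_eq_of_lt (by have := hKlt c; omega)
  refine ⟨fun i j => K i.1 < K j.1, ?_, ?_⟩
  · exact
      { trichotomous := by
          intro i j hn1 hn2
          rcases Nat.lt_trichotomy (K i.1) (K j.1) with hh | hh | hh
          · exact absurd hh hn1
          · exact Subtype.ext (hKinj _ _ hh)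
          · exact absurd hh hn2
        irrefl := fun i => lt_irrefl _
        trans := fun i j k h1 h2 => lt_trans h1 h2 }
  · rintro ⟨i, j, k, a, b, hij, hjk, ⟨hai, -⟩, ⟨-, -⟩, ⟨hak, -⟩⟩
    have hij' : K i.1 < K j.1 := hij
    have hjk' : K j.1 < K k.1 := hjk
    have hai' : Pn (m + 4) a.1 i.1 = true := hai
    have hak' : Pn (m + 4) a.1 k.1 = true := hak
    rcases (pn_iff _ _).mp hai' with h1 | h1 <;> rcases (pn_iff _ _).mp hak' with h2 | h2
    · rw [h1] at hij'; rw [h2] at hjk'; omega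
    · have hanep : a.1 ≠ p := by
        intro hh
        rcases hp with hD | hW
        · exact hD (hh ▸ a.2)
        · exact hW ((h1.trans hh) ▸ i.2)
      have e : K k.1 = K i.1 + 1 := by rw [h2, hKsucc a.1 hanep, h1]
      omega
    · have hanep : a.1 ≠ p := by
        intro hh
        rcases hp with hD | hW
        · exact hD (hh ▸ a.2)
        · exact hW ((h2.trans hh) ▸ k.2)
      have e : K i.1 = K k.1 + 1 := by rw [h1, hKsucc a.1 hanep, h2]
      omega
    · rw [h1] at hij'; rw [h2] at hjk'; omega


section Rank
variable {β : Type*} [Fintype β] [DecidableEq β] (r : β → β → Prop) [DecidableRel r]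

noncomputable def rnk (v : β) : ℕ := (Finset.univ.filter (fun u => r u v)).card

variable (h : IsStrictTotalOrder β r)
include h

lemma rnk_lt_rnk {i j : β} (hij : r i j) : rnk r i < rnk r j := by
  apply Finset.card_lt_card
  constructor
  · intro u hu
    simp only [Finset.mem_filter, Finset.mem_univ, true_and] at *
    exact h.trans _ _ _ hu hij
  · intro hsub
    have : i ∈ Finset.univ.filter (fun u => r u j) := by
      simp [Finset.mem_filter, hij]
    have := hsub this
    simp only [Finset.mem_filter] at this
    exact h.irrefl i this.2

lemma rnk_inj {i j : β} (hij : rnk r i = rnk r j) : i = j := by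
  rcases (by haveI := h; exact trichotomous_of r i j) with h1 | h1 | h1
  · exact absurd hij (by have := rnk_lt_rnk r h h1; omega)
  · exact h1
  · exact absurd hij (by have := rnk_lt_rnk r h h1; omega)

lemma rnk_between {i k : β} (hik : r i k) (h2 : rnk r i + 1 < rnk r k) :
    ∃ j, r i j ∧ r j k := by
  set Si := Finset.univ.filter (fun u => r u i) with hSi
  set Sk := Finset.univ.filter (fun u => r u k) with hSk
  have hiSi : i ∉ Si := by simp [hSi, fun hh => h.irrefl i hh]
  have hsub : insert i Si ⊆ Sk := by
    intro u hu
    rcases Finset.mem_insert.mp hu with rfl | hu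
    · simp [hSk, hik]
    · simp only [hSi, Finset.mem_filter, Finset.mem_univ, true_and] at hu
      simp only [hSk, Finset.mem_filter, Finset.mem_univ, true_and]
      exact h.trans _ _ _ hu hik
  have hcard : (insert i Si).card < Sk.card := by
    rw [Finset.card_insert_of_notMem hiSi]
    exact h2
  obtain ⟨j, hjk, hj⟩ : ∃ j ∈ Sk, j ∉ insert i Si := by
    by_contra hc
    push_neg at hc
    exact absurd (Finset.card_le_card hc) (by omega)
  simp only [Finset.mem_insert, not_or, hSi, Finset.mem_filter, Finset.mem_univ,
    true_and] at hj
  simp only [hSk, Finset.mem_filter, Finset.mem_univ, true_and] at hjk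
  refine ⟨j, ?_, hjk⟩
  rcases (by haveI := h; exact trichotomous_of r i j) with h1 | rfl | h1
  · exact h1
  · exact absurd rfl hj.1
  · exact absurd h1 hj.2

lemma rnk_lt_card (v : β) : rnk r v < Fintype.card β := by
  rw [← Finset.card_univ]
  apply Finset.card_lt_card
  constructor
  · exact Finset.filter_subset _ _
  · intro hsub
    have := hsub (Finset.mem_univ v)
    simp only [Finset.mem_filter] at this
    exact h.irrefl v this.2

end Rank

lemma val_add_one {m : ℕ} (y : Fin (m + 4)) : (y + 1).val = (y.val + 1) % (m + 4) := by
  rw [Fin.val_add, Fin.val_one]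

lemma val_add_two {m : ℕ} (y : Fin (m + 4)) : (y + 1 + 1).val = (y.val + 2) % (m + 4) := by
  rw [val_add_one, val_add_one, Nat.mod_add_mod]

lemma val_add_three {m : ℕ} (y : Fin (m + 4)) :
    (y + 1 + 1 + 1).val = (y.val + 3) % (m + 4) := by
  rw [val_add_one, val_add_two, Nat.mod_add_mod]

lemma add_one_ne {m : ℕ} (y : Fin (m + 4)) : y + 1 ≠ y := by
  intro hh
  have h1 : (y + 1).val = y.val := congrArg Fin.val hh
  rw [val_add_one] at h1
  rcases mod_small_cases (n := m + 4) (y.val + 1) (by have := y.isLt; omega) with h3 | ⟨h3, h4⟩ <;>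
    (have := y.isLt; omega)

lemma add_two_ne {m : ℕ} (y : Fin (m + 4)) : y + 1 + 1 ≠ y := by
  intro hh
  have h1 : (y + 1 + 1).val = y.val := congrArg Fin.val hh
  rw [val_add_two] at h1
  rcases mod_small_cases (n := m + 4) (y.val + 2) (by have := y.isLt; omega) with h3 | ⟨h3, h4⟩ <;>
    (have := y.isLt; omega)

lemma add_three_ne {m : ℕ} (y : Fin (m + 4)) : y + 1 + 1 + 1 ≠ y := by
  intro hh
  have h1 : (y + 1 + 1 + 1).val = y.val := congrArg Fin.val hh
  rw [val_add_three] at h1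
  rcases mod_small_cases (n := m + 4) (y.val + 3) (by have := y.isLt; omega) with h3 | ⟨h3, h4⟩ <;>
    (have := y.isLt; omega)

lemma exists_b {m : ℕ} (x j : Fin (m + 4)) (hjx : j ≠ x) (hjy : j ≠ x + 1) :
    ∃ b : Fin (m + 4), (j = b ∨ j = b + 1) ∧ ¬(x = b ∨ x = b + 1) ∧
      ¬(x + 1 = b ∨ x + 1 = b + 1) := by
  by_cases hc1 : x = j + 1 ∨ x + 1 = j + 1
  · refine ⟨j - 1, Or.inr (by rw [sub_add_cancel]), ?_, ?_⟩
    · rintro (hh | hh)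
      · -- x = j - 1, so j = x + 1
        apply hjy
        rw [hh, sub_add_cancel]
      · rw [sub_add_cancel] at hh
        exact hjx hh.symm
    · rintro (hh | hh)
      · -- x + 1 = j - 1, so j = x + 1 + 1
        have hj : j = x + 1 + 1 := by rw [hh, sub_add_cancel]
        rcases hc1 with h1 | h1
        · -- x = j + 1, j = x+1+1 = j+1+1+1
          exact add_three_ne j (by rw [← h1, ← hj])
        · -- x + 1 = j + 1, then... x+1 = j+1 and j = (x+1)+1 = j+1+1
          exact add_two_ne j (by rw [← h1, ← hj])
      · rw [sub_add_cancel] at hh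
        exact hjy hh.symm
  · push_neg at hc1
    exact ⟨j, Or.inl rfl, fun hh => hh.elim (fun h => hjx h.symm) (fun h => hc1.1 h),
      fun hh => hh.elim (fun h => hjy h.symm) (fun h => hc1.2 h)⟩

lemma part2 (n : ℕ) (hn : 4 ≤ n) : ¬ SSCable (Pn n) := by
  obtain ⟨m, rfl⟩ : ∃ m, n = m + 4 := ⟨n - 4, by omega⟩
  rintro ⟨r, hsto, hno⟩
  classical
  have key : ∃ (x j : Fin (m + 4)), (r x j ∧ r j (x + 1)) ∨ (r (x + 1) j ∧ r j x) := by
    by_contra hc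
    have hadj : ∀ x : Fin (m + 4),
        rnk r (x + 1) = rnk r x + 1 ∨ rnk r x = rnk r (x + 1) + 1 := by
      intro x
      rcases (by haveI := hsto; exact trichotomous_of r x (x + 1)) with h1 | h1 | h1
      · left
        have hlt := rnk_lt_rnk r hsto h1
        by_contra hh
        have h2 : rnk r x + 1 < rnk r (x + 1) := by omega
        obtain ⟨j, hj1, hj2⟩ := rnk_between r hsto h1 h2
        exact hc ⟨x, j, Or.inl ⟨hj1, hj2⟩⟩
      · exact absurd h1.symm (add_one_ne x)
      · right
        have hlt := rnk_lt_rnk r hsto h1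
        by_contra hh
        have h2 : rnk r (x + 1) + 1 < rnk r x := by omega
        obtain ⟨j, hj1, hj2⟩ := rnk_between r hsto h1 h2
        exact hc ⟨x, j, Or.inr ⟨hj1, hj2⟩⟩
    have hcard : ∀ v : Fin (m + 4), rnk r v < m + 4 := by
      intro v
      have := rnk_lt_card r hsto v
      simpa using this
    let F : Fin (m + 4) → Fin (m + 3) := fun x =>
      ⟨min (rnk r x) (rnk r (x + 1)), by
        rcases hadj x with h1 | h1 <;> (have := hcard x; have := hcard (x + 1); omega)⟩
    have hFinj : Function.Injective F := by
      intro x y hxy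
      have hmin : min (rnk r x) (rnk r (x + 1)) = min (rnk r y) (rnk r (y + 1)) :=
        congrArg Fin.val hxy
      rcases hadj x with h1 | h1 <;> rcases hadj y with h2 | h2
      · exact rnk_inj r hsto (by omega)
      · have e1 : x = y + 1 := rnk_inj r hsto (by omega)
        have e2 : x + 1 = y := rnk_inj r hsto (by omega)
        exact absurd (by rw [← e1, ← e2] : y + 1 + 1 = y) (add_two_ne y)
      · have e1 : x + 1 = y := rnk_inj r hsto (by omega)
        have e2 : x = y + 1 := rnk_inj r hsto (by omega)
        exact absurd (by rw [← e2, ← e1] : y + 1 + 1 = y) (add_two_ne y)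
      · exact rnk_inj r hsto (by omega)
    have hle := Fintype.card_le_of_injective F hFinj
    simp only [Fintype.card_fin] at hle
    omega
  obtain ⟨x, j, hxj⟩ := key
  rcases hxj with ⟨h1, h2⟩ | ⟨h1, h2⟩
  · have hjx : j ≠ x := fun hh => hsto.irrefl x (hh ▸ h1)
    have hjy : j ≠ x + 1 := fun hh => hsto.irrefl (x + 1) (hh ▸ h2)
    obtain ⟨b, hbj, hbx, hby⟩ := exists_b x j hjx hjy
    exact hno ⟨x, j, x + 1, x, b, h1, h2,
      ⟨(pn_iff x x).mpr (Or.inl rfl), (pn_false_iff b x).mpr hbx⟩,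
      ⟨(pn_iff b j).mpr hbj, (pn_false_iff x j).mpr (fun hh => hh.elim hjx hjy)⟩,
      ⟨(pn_iff x (x + 1)).mpr (Or.inr rfl), (pn_false_iff b (x + 1)).mpr hby⟩⟩
  · have hjx : j ≠ x := fun hh => hsto.irrefl x (hh ▸ h2)
    have hjy : j ≠ x + 1 := fun hh => hsto.irrefl (x + 1) (hh ▸ h1)
    obtain ⟨b, hbj, hbx, hby⟩ := exists_b x j hjx hjy
    exact hno ⟨x + 1, j, x, x, b, h1, h2,
      ⟨(pn_iff x (x + 1)).mpr (Or.inr rfl), (pn_false_iff b (x + 1)).mpr hby⟩,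
      ⟨(pn_iff b j).mpr hbj, (pn_false_iff x j).mpr (fun hh => hh.elim hjx hjy)⟩,
      ⟨(pn_iff x x).mpr (Or.inl rfl), (pn_false_iff b x).mpr hbx⟩⟩

lemma ssc_pullback {α β : Type*} {α' β' : Type*} (P : α → β → Bool) (Q : α' → β' → Bool)
    (f : α' → α) (g : β' → β) (hg : Function.Injective g)
    (h : ∀ c v, Q c v = P (f c) (g v)) (hP : SSCable P) : SSCable Q := by
  obtain ⟨r, hsto, hno⟩ := hP
  refine ⟨fun i j => r (g i) (g j), ?_, ?_⟩
  · exact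
      { trichotomous := by
          intro i j hn1 hn2
          rcases (by haveI := hsto; exact trichotomous_of r (g i) (g j)) with h1 | h1 | h1
          · exact absurd h1 hn1
          · exact hg h1
          · exact absurd h1 hn2
        irrefl := fun i => hsto.irrefl (g i)
        trans := fun i j k h1 h2 => hsto.trans _ _ _ h1 h2 }
  · rintro ⟨i, j, k, a, b, hij, hjk, ⟨h1, h2⟩, ⟨h3, h4⟩, ⟨h5, h6⟩⟩
    refine hno ⟨g i, g j, g k, f a, f b, hij, hjk, ?_, ?_, ?_⟩ <;>
      constructor <;> rw [← h] <;> assumption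

/-- for `n ≥ 4`, every proper subprofile of `P_n` (at least one candidate or
voter removed) is seemingly single-crossing while `P_n` itself is not; hence the `P_n` form
an infinite family of minimal non-SSC profiles, and possibly single-crossing (= SSC)
approval profiles admit no characterization by finitely many forbidden subprofiles. -/
theorem stmt18 :
    (∀ n, 4 ≤ n → ∀ (D W : Set (Fin n)), (D ≠ Set.univ ∨ W ≠ Set.univ) →
      SSCable (fun (c : D) (v : W) => Pn n c.1 v.1)) ∧
    (∀ n, 4 ≤ n → ¬ SSCable (Pn n)) ∧
    ¬ ∃ s : Finset ((m' : ℕ) × (n' : ℕ) × (Fin m' → Fin n' → Bool)),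
        ∀ (m n : ℕ) (P : Fin m → Fin n → Bool),
          SSCable P ↔ ∀ q ∈ s, ¬ Embeds q.2.2 P := by
  refine ⟨part1, part2, ?_⟩
  rintro ⟨s, hs⟩
  set N : ℕ := 4 + s.sup (fun q => q.1) with hN
  have hN4 : 4 ≤ N := by omega
  have h2 := part2 N hN4
  have hex : ∃ q ∈ s, Embeds q.2.2 (Pn N) := by
    by_contra hc
    push_neg at hc
    exact h2 ((hs N N (Pn N)).mpr (fun q hq => hc q hq))
  obtain ⟨q, hq, f, g, hfg⟩ := hex
  -- f : Fin q.1 ↪ Fin N is not surjective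
  have hq1 : q.1 < N := by
    have h3 : q.1 ≤ s.sup (fun q => q.1) := Finset.le_sup hq
    omega
  have hnotsurj : ∃ d : Fin N, d ∉ Set.range ⇑f := by
    by_contra hc
    push_neg at hc
    have hsurj : Function.Surjective ⇑f := fun d => hc d
    have := Fintype.card_le_of_surjective ⇑f hsurj
    simp only [Fintype.card_fin] at this
    omega
  obtain ⟨d, hd⟩ := hnotsurj
  have hDne : Set.range ⇑f ≠ (Set.univ : Set (Fin N)) := by
    intro hh
    exact hd (hh ▸ Set.mem_univ d)
  have hS := part1 N hN4 (Set.range ⇑f) Set.univ (Or.inl hDne)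
  have hQ : SSCable q.2.2 := by
    refine ssc_pullback _ q.2.2
      (fun c => (⟨f c, Set.mem_range_self c⟩ : Set.range ⇑f))
      (fun v => (⟨g v, Set.mem_univ _⟩ : (Set.univ : Set (Fin N)))) ?_ ?_ hS
    · intro u v huv
      exact g.injective (congrArg Subtype.val huv)
    · intro c v
      exact hfg c v
  have hself : Embeds q.2.2 q.2.2 :=
    ⟨Function.Embedding.refl _, Function.Embedding.refl _, fun _ _ => rfl⟩
  exact ((hs q.1 q.2.1 q.2.2).mp hQ) q hq hself
end

section
/- If a profile of weak orders P = (≻_i)_{i∈[n]} is seemingly single-crossing with respect to a linear order ◁ on voters, then each ≻_i can be extended to a linear order ≻'_i such that the profile (≻'_i) is single-crossing with respect to ◁. Hence a profile of weak orders is seemingly single-crossing w.r.t. ◁ iff it is possibly single-crossing w.r.t. ◁. -/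
namespace Stmt19Aux


variable {m : ℕ}

def IsWeak (W : Fin m → Fin m → Prop) : Prop :=
  Irreflexive W ∧ Transitive W ∧ Transitive (fun a b => ¬ W a b ∧ ¬ W b a)

def IsSTO (W : Fin m → Fin m → Prop) : Prop :=
  Irreflexive W ∧ Transitive W ∧ ∀ a b, a ≠ b → W a b ∨ W b a

lemma IsSTO.isWeak {W : Fin m → Fin m → Prop} (h : IsSTO W) : IsWeak W := by
  refine ⟨h.1, h.2.1, fun a b c hab hbc => ?_⟩
  constructor
  · intro hac
    rcases eq_or_ne b c with rfl | hne
    · exact hab.1 hac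
    · rcases h.2.2 b c hne with hbc' | hcb
      · exact hbc.1 hbc'
      · exact hab.1 (h.2.1 hac hcb)
  · intro hca
    rcases eq_or_ne c b with rfl | hne
    · exact hab.2 hca
    · rcases h.2.2 c b hne with hcb | hbc'
      · exact hbc.2 hcb
      · exact hab.2 (h.2.1 hbc' hca)

lemma IsWeak.asymm {W : Fin m → Fin m → Prop} (hW : IsWeak W) {a b} (h : W a b) : ¬ W b a :=
  fun h' => hW.1 a (hW.2.1 h h')

lemma IsSTO.asymm {W : Fin m → Fin m → Prop} (hW : IsSTO W) {a b} (h : W a b) : ¬ W b a :=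
  hW.isWeak.asymm h

lemma IsWeak.trans_tie_right {W : Fin m → Fin m → Prop} (hW : IsWeak W) {a b c} (h : W a b)
    (h1 : ¬ W b c) (h2 : ¬ W c b) : W a c := by
  by_contra hac
  have hca : ¬ W c a := fun hca => h2 (hW.2.1 hca h)
  exact (hW.2.2 ⟨hac, hca⟩ ⟨h2, h1⟩).1 h

lemma IsWeak.trans_tie_left {W : Fin m → Fin m → Prop} (hW : IsWeak W) {a b c}
    (h1 : ¬ W a b) (h2 : ¬ W b a) (h : W b c) : W a c := by
  by_contra hac
  have hca : ¬ W c a := fun hca => h2 (hW.2.1 h hca)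
  exact (hW.2.2 ⟨h2, h1⟩ ⟨hac, hca⟩).1 h

/-- refine a weak order by a tie-breaking relation -/
def ref (W L : Fin m → Fin m → Prop) (a b : Fin m) : Prop :=
  W a b ∨ (¬ W a b ∧ ¬ W b a ∧ L a b)

lemma ref_of {W L : Fin m → Fin m → Prop} {a b} (h : W a b) : ref W L a b := Or.inl h

lemma ref_sto {W L : Fin m → Fin m → Prop} (hW : IsWeak W) (hL : IsSTO L) :
    IsSTO (ref W L) := by
  refine ⟨?_, ?_, ?_⟩
  · rintro a (h | ⟨_, _, h⟩)
    · exact hW.1 a h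
    · exact hL.1 a h
  · rintro a b c (hab | ⟨h1, h2, h3⟩) (hbc | ⟨g1, g2, g3⟩)
    · exact Or.inl (hW.2.1 hab hbc)
    · exact Or.inl (hW.trans_tie_right hab g1 g2)
    · exact Or.inl (hW.trans_tie_left h1 h2 hbc)
    · refine Or.inr ⟨?_, ?_, hL.2.1 h3 g3⟩
      · exact (hW.2.2 ⟨h1, h2⟩ ⟨g1, g2⟩).1
      · exact (hW.2.2 ⟨h1, h2⟩ ⟨g1, g2⟩).2
  · intro a b hne
    by_cases hab : W a b
    · exact Or.inl (Or.inl hab)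
    by_cases hba : W b a
    · exact Or.inr (Or.inl hba)
    rcases hL.2.2 a b hne with h | h
    · exact Or.inl (Or.inr ⟨hab, hba, h⟩)
    · exact Or.inr (Or.inr ⟨hba, hab, h⟩)

lemma ref_tie {W L : Fin m → Fin m → Prop} {a b} (h1 : ¬ W a b) (h2 : ¬ W b a) :
    ref W L a b ↔ L a b := by
  simp [ref, h1, h2]

/-- iterated refinement along a sequence of weak orders -/
def pass (V : ℕ → Fin m → Fin m → Prop) (L : Fin m → Fin m → Prop) :
    ℕ → Fin m → Fin m → Prop
  | 0 => ref (V 0) L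
  | (t+1) => ref (V (t+1)) (pass V L t)

lemma pass_of {V : ℕ → Fin m → Fin m → Prop} {L : Fin m → Fin m → Prop} {t a b}
    (h : V t a b) : pass V L t a b := by
  cases t <;> exact Or.inl h

lemma pass_sto {V : ℕ → Fin m → Fin m → Prop} {L : Fin m → Fin m → Prop}
    (hV : ∀ t, IsWeak (V t)) (hL : IsSTO L) (t : ℕ) : IsSTO (pass V L t) := by
  induction t with
  | zero => exact ref_sto (hV 0) hL
  | succ t ih => exact ref_sto (hV (t+1)) ih

/-- a tie at step t+1 means the pass is unchanged -/
lemma pass_tie_step {V : ℕ → Fin m → Fin m → Prop} {L : Fin m → Fin m → Prop} {t a b}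
    (h1 : ¬ V (t+1) a b) (h2 : ¬ V (t+1) b a) :
    pass V L (t+1) a b ↔ pass V L t a b := ref_tie h1 h2

/-- if all voters up to t are tied, the pass agrees with L -/
lemma pass_tie_all {V : ℕ → Fin m → Fin m → Prop} {L : Fin m → Fin m → Prop} {a b} :
    ∀ t, (∀ s, s ≤ t → ¬ V s a b ∧ ¬ V s b a) → (pass V L t a b ↔ L a b) := by
  intro t
  induction t with
  | zero => intro h; exact ref_tie (h 0 le_rfl).1 (h 0 le_rfl).2
  | succ t ih =>
    intro h
    rw [pass_tie_step (h (t+1) le_rfl).1 (h (t+1) le_rfl).2]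
    exact ih (fun s hs => h s (hs.trans (Nat.le_succ t)))

lemma pass_tie_range {V : ℕ → Fin m → Fin m → Prop} {L : Fin m → Fin m → Prop} {a b}
    (j0 : ℕ) : ∀ d, (∀ j, j0 < j → j ≤ j0 + d → ¬ V j a b ∧ ¬ V j b a) →
    (pass V L (j0 + d) a b ↔ pass V L j0 a b) := by
  intro d
  induction d with
  | zero => intro _; rfl
  | succ d ih =>
    intro h
    have hj : j0 + (d+1) = (j0 + d) + 1 := rfl
    rw [hj, pass_tie_step (h (j0+d+1) (by omega) (by omega)).1
        (h (j0+d+1) (by omega) (by omega)).2]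
    exact ih (fun j h1 h2 => h j h1 (by omega))

/-- a switch in the pass is witnessed by a strict preference -/
lemma pass_switch {V : ℕ → Fin m → Fin m → Prop} {L : Fin m → Fin m → Prop}
    (hV : ∀ t, IsWeak (V t)) (hL : IsSTO L) {a b} :
    ∀ t s, s < t → pass V L s a b → pass V L t b a →
      ∃ u, s ≤ u ∧ u < t ∧ pass V L u a b ∧ V (u+1) b a := by
  intro t
  induction t with
  | zero => intro s hs; omega
  | succ t ih =>
    intro s hs hab hba
    by_cases hV1 : V (t+1) b a
    · -- if pass V L t a b, take u = t; else recurse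
      by_cases hpt : pass V L t a b
      · exact ⟨t, by omega, by omega, hpt, hV1⟩
      · -- then pass V L t b a or s = t case
        rcases Nat.lt_or_ge s t with h | h
        · -- pass V L t b a? we know V(t+1) b a; but maybe pass t a b fails;
          -- by trichotomy pass t b a or a = b
          rcases eq_or_ne a b with rfl | hne
          · exact absurd hab ((pass_sto hV hL s).1 a)
          rcases (pass_sto hV hL t).2.2 a b hne with h' | h'
          · exact absurd h' hpt
          · obtain ⟨u, hu1, hu2, hu3, hu4⟩ := ih s h hab h'
            exact ⟨u, hu1, by omega, hu3, hu4⟩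
        · have : s = t := by omega
          subst this
          exact absurd hab hpt
    · by_cases hV2 : V (t+1) a b
      · -- pass (t+1) a b, contradicting hba
        have : pass V L (t+1) a b := ref_of hV2
        exact absurd this ((pass_sto hV hL (t+1)).asymm hba)
      · have hba' : pass V L t b a := (pass_tie_step hV1 hV2).mp hba
        rcases Nat.lt_or_ge s t with h | h
        · obtain ⟨u, hu1, hu2, hu3, hu4⟩ := ih s h hab hba'
          exact ⟨u, hu1, by omega, hu3, hu4⟩
        · have : s = t := by omega
          subst this
          exact absurd hab ((pass_sto hV hL s).asymm hba')



variable {m : ℕ}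

def base0 : Fin m → Fin m → Prop := fun a b => a < b

lemma base0_sto : IsSTO (base0 (m := m)) :=
  ⟨fun a h => lt_irrefl a h, fun _ _ _ h1 h2 => lt_trans h1 h2,
   fun a b h => h.lt_or_gt⟩

lemma IsSTO.isStrictTotalOrder {W : Fin m → Fin m → Prop} (h : IsSTO W) :
    IsStrictTotalOrder (Fin m) W where
  irrefl := h.1
  trans := h.2.1
  trichotomous := fun a b =>
    fun h1 h2 => by_contra fun hab => (h.2.2 a b hab).elim h1 h2

/-- the two-pass tie-broken profile -/
def twoPass (V : ℕ → Fin m → Fin m → Prop) (N : ℕ) : ℕ → Fin m → Fin m → Prop :=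
  pass V (pass (fun j => V (N - 1 - j)) base0 (N - 1))

lemma twoPass_sto {V : ℕ → Fin m → Fin m → Prop} (hV : ∀ t, IsWeak (V t)) (N t : ℕ) :
    IsSTO (twoPass V N t) :=
  pass_sto hV (pass_sto (fun j => hV _) base0_sto (N - 1)) t

lemma twoPass_of {V : ℕ → Fin m → Fin m → Prop} {N t : ℕ} {a b : Fin m}
    (h : V t a b) : twoPass V N t a b := pass_of h

lemma no_pattern {V : ℕ → Fin m → Fin m → Prop} (hV : ∀ t, IsWeak (V t)) {N : ℕ}
    (hssc : ∀ s t u (a b : Fin m), s < t → t < u → u < N →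
      V s a b → V t b a → V u a b → False)
    {t1 t2 t3 : ℕ} {a b : Fin m} (h12 : t1 < t2) (h23 : t2 < t3) (h3N : t3 < N)
    (hQ1 : twoPass V N t1 a b) (hQ2 : twoPass V N t2 b a) (hQ3 : twoPass V N t3 a b) :
    False := by
  set Vb : ℕ → Fin m → Fin m → Prop := fun j => V (N - 1 - j) with hVbdef
  have hVb : ∀ j, IsWeak (Vb j) := fun j => hV _
  set Lb : Fin m → Fin m → Prop := pass Vb base0 (N - 1) with hLbdef
  have hLb : IsSTO Lb := pass_sto hVb base0_sto (N - 1)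
  -- first switch: a over b changes to b over a somewhere in (t1, t2]
  obtain ⟨u1, hu1a, hu1b, hu1c, hu1d⟩ := pass_switch hV hLb t2 t1 h12 hQ1 hQ2
  -- second switch: b over a changes back to a over b somewhere in (t2, t3]
  obtain ⟨u2, hu2a, hu2b, _, hu2d⟩ := pass_switch hV hLb t3 t2 h23 hQ2 hQ3
  -- u1 + 1 ≤ t2 < u2 + 1 ≤ t3 ; V (u1+1) b a ; V (u2+1) a b ; Q u1 a b
  by_cases hA : ∃ s, s < u1 + 1 ∧ V s a b
  · obtain ⟨s, hs, hVs⟩ := hA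
    exact hssc s (u1 + 1) (u2 + 1) a b hs (by omega) (by omega) hVs hu1d hu2d
  · push_neg at hA
    by_cases hB : ∃ s, s < u1 + 1 ∧ V s b a
    · obtain ⟨s, hs, hVs⟩ := hB
      have hQs : pass V Lb s b a := pass_of hVs
      rcases Nat.lt_or_ge s u1 with hlt | hge
      · obtain ⟨u, hua, hub, _, hud⟩ := pass_switch hV hLb u1 s hlt hQs hu1c
        exact hA (u + 1) (by omega) hud
      · have : s = u1 := by omega
        subst this
        exact (pass_sto hV hLb s).asymm hQs hu1c
    · push_neg at hB
      have hties : ∀ s, s ≤ u1 → ¬ V s a b ∧ ¬ V s b a :=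
        fun s hsu => ⟨hA s (by omega), hB s (by omega)⟩
      have hQLb : Lb a b := (pass_tie_all u1 hties).mp hu1c
      -- the backward pass puts b over a
      have ht'le : u1 + 1 ≤ N - 1 := by omega
      have hj0 : N - 1 - (N - 1 - (u1 + 1)) = u1 + 1 := by omega
      have hVb0 : Vb (N - 1 - (u1 + 1)) b a := by
        show V (N - 1 - (N - 1 - (u1 + 1))) b a
        rw [hj0]; exact hu1d
      have h1 : pass Vb base0 (N - 1 - (u1 + 1)) b a := pass_of hVb0
      have h2 := pass_tie_range (V := Vb) (L := base0) (a := b) (b := a)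
          (N - 1 - (u1 + 1)) (N - 1 - (N - 1 - (u1 + 1)))
          (fun j hj1 hj2 => by
            have hjNa : N - 1 - j < u1 + 1 := by omega
            exact ⟨(hties (N - 1 - j) (by omega)).2, (hties (N - 1 - j) (by omega)).1⟩)
      have heq : (N - 1 - (u1 + 1)) + (N - 1 - (N - 1 - (u1 + 1))) = N - 1 := by omega
      rw [heq] at h2
      exact hLb.asymm hQLb (h2.mpr h1)

lemma exists_sort {n : ℕ} (r : Fin n → Fin n → Prop) (hr : IsStrictTotalOrder (Fin n) r) :
    ∃ σ : Fin n ≃ Fin n, ∀ s t : Fin n, s < t ↔ r (σ s) (σ t) := by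
  letI : DecidableRel r := fun a b => Classical.dec _
  letI lo : LinearOrder (Fin n) := linearOrderOfSTO r
  have e := @Fintype.orderIsoFinOfCardEq (Fin n) lo (Fin.fintype n) n (Fintype.card_fin n)
  refine ⟨e.toEquiv, fun s t => ?_⟩
  have h := @OrderIso.lt_iff_lt (Fin n) (Fin n) inferInstance lo.toPreorder e s t
  rw [← h]
  rfl

end Stmt19Aux

open Stmt19Aux

/-- a profile of weak orders is seemingly single-crossing w.r.t. a linear
order `r` on the voters iff each weak order extends to a linear order such that the
resulting profile is single-crossing w.r.t. `r` (i.e. SSC w.r.t. `r` iff possibly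
single-crossing w.r.t. `r`). -/
theorem stmt19 {n m : ℕ} (P : Fin n → Fin m → Fin m → Prop)
    (hw : ∀ i, Irreflexive (P i) ∧ Transitive (P i) ∧
      Transitive (fun a b => ¬ P i a b ∧ ¬ P i b a))
    (r : Fin n → Fin n → Prop) (hr : IsStrictTotalOrder (Fin n) r) :
    (¬ ∃ (i j k : Fin n) (a b : Fin m),
        r i j ∧ r j k ∧ P i a b ∧ P j b a ∧ P k a b) ↔
    (∃ P' : Fin n → Fin m → Fin m → Prop,
      (∀ i, IsStrictTotalOrder (Fin m) (P' i)) ∧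
      (∀ i a b, P i a b → P' i a b) ∧
      ¬ ∃ (i j k : Fin n) (a b : Fin m),
          r i j ∧ r j k ∧ P' i a b ∧ P' j b a ∧ P' k a b) := by
  constructor
  · intro hssc
    rcases Nat.eq_zero_or_pos n with hn | hn
    · subst hn
      exact ⟨fun _ a b => a < b, fun i => i.elim0, fun i => i.elim0,
        fun ⟨i, _⟩ => i.elim0⟩
    obtain ⟨σ, hσ⟩ := exists_sort r hr
    set idx : ℕ → Fin n := fun t => ⟨t % n, Nat.mod_lt _ hn⟩ with hidx
    set V : ℕ → Fin m → Fin m → Prop := fun t => P (σ (idx t)) with hV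
    have hVweak : ∀ t, IsWeak (V t) := fun t => ⟨(hw _).1, (hw _).2.1, (hw _).2.2⟩
    have hidx_eq : ∀ (i : Fin n), idx (i : ℕ) = i := fun i =>
      Fin.ext (Nat.mod_eq_of_lt i.isLt)
    have hVssc : ∀ s t u (a b : Fin m), s < t → t < u → u < n →
        V s a b → V t b a → V u a b → False := by
      intro s t u a b hst htu hun hs ht hu
      refine hssc ⟨σ (idx s), σ (idx t), σ (idx u), a, b, ?_, ?_, hs, ht, hu⟩
      · rw [← hσ]
        show s % n < t % n
        rw [Nat.mod_eq_of_lt (by omega), Nat.mod_eq_of_lt (by omega)]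
        exact hst
      · rw [← hσ]
        show t % n < u % n
        rw [Nat.mod_eq_of_lt (by omega), Nat.mod_eq_of_lt (by omega)]
        exact htu
    refine ⟨fun i => twoPass V n ((σ.symm i : Fin n) : ℕ), ?_, ?_, ?_⟩
    · intro i
      exact (twoPass_sto hVweak n _).isStrictTotalOrder
    · intro i a b h
      refine twoPass_of ?_
      show P (σ (idx ((σ.symm i : Fin n) : ℕ))) a b
      rw [hidx_eq, Equiv.apply_symm_apply]
      exact h
    · rintro ⟨i, j, k, a, b, hij, hjk, h1, h2, h3⟩
      have ht12 : ((σ.symm i : Fin n) : ℕ) < ((σ.symm j : Fin n) : ℕ) := by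
        have := (hσ (σ.symm i) (σ.symm j)).mpr
        simp only [Equiv.apply_symm_apply] at this
        exact this hij
      have ht23 : ((σ.symm j : Fin n) : ℕ) < ((σ.symm k : Fin n) : ℕ) := by
        have := (hσ (σ.symm j) (σ.symm k)).mpr
        simp only [Equiv.apply_symm_apply] at this
        exact this hjk
      exact no_pattern hVweak hVssc ht12 ht23 (σ.symm k).isLt h1 h2 h3
  · rintro ⟨P', hsto, hext, hsc⟩ ⟨i, j, k, a, b, hij, hjk, h1, h2, h3⟩
    exact hsc ⟨i, j, k, a, b, hij, hjk, hext _ _ _ h1, hext _ _ _ h2, hext _ _ _ h3⟩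
end
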